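/- Theorem 4.4 (computation of the Braun–Douglas number d(m,n)): for all integers n ≥ 1 and m ≥ n + 2, gcd{ S(m, 2(i−1)) : 1 ≤ i ≤ n } = m / gcd(m, K(n)). -/

import Mathlib

/-- `S(m,i) = Σ_{k=1}^{m} C(2k-1, i)`. -/
def Smi (m i : ℕ) : ℕ := ∑ k ∈ Finset.Icc 1 m, (2*k-1).choose i

/-- `K(n) = 2^⌊log₂ n⌋ · ∏_{p odd prime, p ≤ 2n} p^⌊log_p (2n)⌋`. -/
def Kn (n : ℕ) : ℕ :=
  2 ^ Nat.log 2 n *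
    ∏ p ∈ (Finset.range (2*n+1)).filter (fun p => p.Prime ∧ Odd p),
      p ^ Nat.log p (2*n)

/-! ### Auxiliary development -/

/-- Coefficients of the expansion of `S(m, 2j)` in the binomial basis `C(m, t)`. -/
def aCoef (j t : ℕ) : ℕ :=
  4 ^ (t - (j+1)) *
    ((t-1).choose (2*j+1-t) + 2 * if t ≤ 2*j then (t-1).choose (2*j-t) else 0)

lemma four_pow_dvd_aCoef (j t : ℕ) : 4 ^ (t - (j+1)) ∣ aCoef j t := dvd_mul_right _ _

lemma aCoef_top (j : ℕ) : aCoef j (2*j+1) = 4 ^ j := by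
  rw [aCoef, show 2*j+1 - (j+1) = j by omega, show 2*j+1-(2*j+1) = 0 by omega,
    if_neg (by omega), Nat.choose_zero_right]
  ring

lemma aCoef_bot (j : ℕ) (hj : 1 ≤ j) : aCoef j (j+1) = 2*j+1 := by
  have h5 : j.choose (j - 1) = j := by
    rw [Nat.choose_symm (by omega : 1 ≤ j), Nat.choose_one_right]
  rw [aCoef, show j+1 - (j+1) = 0 by omega, show j+1-1 = j by omega,
    show 2*j+1-(j+1) = j by omega, show 2*j - (j+1) = j - 1 by omega,
    if_pos (by omega), Nat.choose_self, h5, pow_zero, one_mul]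
  omega

lemma aCoef_ne_zero (j : ℕ) : aCoef j (2*j+1) ≠ 0 := by
  rw [aCoef_top]; positivity

section Poly

open Polynomial

lemma C2_eq : (C 2 : ℕ[X]) = 2 := map_ofNat C 2

lemma poly_split (s : ℕ) : ((X:ℕ[X])^2 + 2*X)^s = ((X + C 2)^s) * X^s := by
  rw [← mul_pow]
  congr 1
  rw [C2_eq]
  ring

lemma q_coeff (s d : ℕ) : (((X:ℕ[X]) + 1) * (X + C 2)^s).coeff d =
    (if 1 ≤ d then 2^(s-(d-1)) * s.choose (d-1) else 0) + 2^(s-d) * s.choose d := by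
  have h : ((X:ℕ[X]) + 1) * (X + C 2)^s = (X + C 2)^s * X^1 + (X + C 2)^s := by ring
  rw [h, coeff_add, coeff_mul_X_pow']
  simp only [coeff_X_add_C_pow, Nat.cast_id]

lemma cc_formula (j s : ℕ) (hs : s ≤ 2*j) :
    (((X:ℕ[X]) + 1) * ((X:ℕ[X])^2 + 2*X)^s).coeff (2*j) = aCoef j (s+1) := by
  rw [poly_split, show ((X:ℕ[X])+1) * ((X + C 2)^s * X^s) = (((X+1) * (X + C 2)^s)) * X^s by ring,
      coeff_mul_X_pow', if_pos hs, q_coeff]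
  rw [aCoef, show (s+1) - (j+1) = s - j by omega, Nat.add_sub_cancel,
    show 2*j+1-(s+1) = 2*j-s by omega, show 2*j-(s+1) = 2*j-s-1 by omega]
  rcases lt_or_ge s j with hsj | hsj
  · have hz1 : s.choose (2*j-s) = 0 := Nat.choose_eq_zero_of_lt (by omega)
    have hz2 : s.choose (2*j-s-1) = 0 := Nat.choose_eq_zero_of_lt (by omega)
    split_ifs <;> simp [hz1, hz2]
  · have e1 : (2:ℕ)^(s-(2*j-s)) = 4^(s-j) := by
      rw [show s-(2*j-s) = 2*(s-j) by omega, pow_mul]; norm_num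
    have hiff : (1 ≤ 2*j - s) ↔ (s+1 ≤ 2*j) := by omega
    rcases le_or_gt (s+1) (2*j) with hs1 | hs1
    · have e2 : (2:ℕ)^(s-(2*j-s-1)) = 2 * 4^(s-j) := by
        rw [show s-(2*j-s-1) = 2*(s-j)+1 by omega, pow_succ, pow_mul]; ring
      rw [if_pos (hiff.mpr hs1), if_pos hs1, e1, e2]
      ring
    · rw [if_neg (by omega), if_neg (by omega), e1]
      ring

lemma cc_zero (j s : ℕ) (hs : 2*j < s) :
    (((X:ℕ[X]) + 1) * ((X:ℕ[X])^2 + 2*X)^s).coeff (2*j) = 0 := by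
  rw [poly_split, show ((X:ℕ[X])+1) * ((X + C 2)^s * X^s) = (((X+1) * (X + C 2)^s)) * X^s by ring,
      coeff_mul_X_pow', if_neg (by omega)]

lemma key_identity (j m : ℕ) :
    (2*m+1).choose (2*j) = ∑ t ∈ Finset.Icc 1 (2*j+1), aCoef j t * m.choose (t-1) := by
  have hre : ∑ t ∈ Finset.Icc 1 (2*j+1), aCoef j t * m.choose (t-1)
      = ∑ s ∈ Finset.range (2*j+1), aCoef j (s+1) * m.choose s := by
    rw [← Finset.Ico_add_one_right_eq_Icc, Finset.sum_Ico_eq_sum_range]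
    apply Finset.sum_congr (by rw [Nat.add_sub_cancel])
    intro i _
    rw [add_comm 1 i, Nat.add_sub_cancel]
  have hpoly : ((X + 1 : ℕ[X]))^(2*m+1)
      = ∑ s ∈ Finset.range (m+1), ((m.choose s : ℕ[X])) * ((X+1) * ((X:ℕ[X])^2+2*X)^s) := by
    have h2 : ((X+1:ℕ[X]))^(2*m+1) = (X+1) * (((X:ℕ[X])^2+2*X) + 1)^m := by
      rw [pow_succ, pow_mul, show ((X+1:ℕ[X]))^2 = (X^2+2*X)+1 by ring]
      ring
    rw [h2, add_pow, Finset.mul_sum]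
    apply Finset.sum_congr rfl
    intro s _
    ring
  have hco : (2*m+1).choose (2*j)
      = ∑ s ∈ Finset.range (m+1),
          (((X:ℕ[X])+1) * ((X:ℕ[X])^2+2*X)^s).coeff (2*j) * m.choose s := by
    have := congrArg (fun q : ℕ[X] => q.coeff (2*j)) hpoly
    simp only [coeff_X_add_one_pow, Nat.cast_id, finset_sum_coeff, coeff_natCast_mul] at this
    rw [this]
    apply Finset.sum_congr rfl
    intro s _
    ring
  set F : ℕ → ℕ := fun s => (((X:ℕ[X])+1) * ((X:ℕ[X])^2+2*X)^s).coeff (2*j) * m.choose s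
    with hF
  have hext1 : ∑ s ∈ Finset.range (2*j+1), F s
      = ∑ s ∈ Finset.range (max (2*j+1) (m+1)), F s := by
    apply Finset.sum_subset (Finset.range_subset_range.2 (le_max_left _ _))
    intro x _ hx
    rw [Finset.mem_range, not_lt] at hx
    rw [hF]
    simp only
    rw [cc_zero j x (by omega), zero_mul]
  have hext2 : ∑ s ∈ Finset.range (m+1), F s
      = ∑ s ∈ Finset.range (max (2*j+1) (m+1)), F s := by
    apply Finset.sum_subset (Finset.range_subset_range.2 (le_max_right _ _))
    intro x _ hx
    rw [Finset.mem_range, not_lt] at hx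
    rw [hF]
    simp only
    rw [Nat.choose_eq_zero_of_lt (by omega), mul_zero]
  rw [hre, hco]
  have hcongr : ∑ s ∈ Finset.range (2*j+1), aCoef j (s+1) * m.choose s
      = ∑ s ∈ Finset.range (2*j+1), F s := by
    apply Finset.sum_congr rfl
    intro s hs
    rw [Finset.mem_range] at hs
    rw [hF]
    simp only
    rw [cc_formula j s (by omega)]
  rw [hcongr, hext1, ← hext2]

end Poly

lemma smi_expansion (m j : ℕ) :
    Smi m (2*j) = ∑ t ∈ Finset.Icc 1 (2*j+1), aCoef j t * m.choose t := by
  induction m with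
  | zero =>
      rw [Smi, show Finset.Icc 1 0 = ∅ from Finset.Icc_eq_empty (by omega), Finset.sum_empty]
      symm
      apply Finset.sum_eq_zero
      intro t ht
      have ht1 := (Finset.mem_Icc.mp ht).1
      rw [Nat.choose_eq_zero_of_lt (by omega), mul_zero]
  | succ m ih =>
      have hS : Smi (m+1) (2*j) = Smi m (2*j) + (2*m+1).choose (2*j) := by
        rw [Smi, Smi, Finset.sum_Icc_succ_top (by omega : 1 ≤ m+1)]
        rw [show 2*(m+1)-1 = 2*m+1 by omega]
      rw [hS, ih, key_identity]
      rw [← Finset.sum_add_distrib]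
      apply Finset.sum_congr rfl
      intro t ht
      have ht1 : 1 ≤ t := (Finset.mem_Icc.mp ht).1
      obtain ⟨u, rfl⟩ : ∃ u, t = u + 1 := ⟨t-1, by omega⟩
      rw [Nat.choose_succ_succ, Nat.add_sub_cancel, Nat.mul_add]
      ring

lemma smi_zero (m : ℕ) : Smi m 0 = m := by
  rw [Smi]
  simp

lemma choose_mul_eq (m t : ℕ) (hm : 1 ≤ m) (ht : 1 ≤ t) :
    m.choose t * t = m * (m-1).choose (t-1) := by
  obtain ⟨a, rfl⟩ : ∃ a, m = a+1 := ⟨m-1, by omega⟩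
  obtain ⟨b, rfl⟩ : ∃ b, t = b+1 := ⟨t-1, by omega⟩
  rw [Nat.add_sub_cancel, Nat.add_sub_cancel, ← Nat.add_one_mul_choose_eq]

lemma pow_dvd_choose_aux {p : ℕ} (hp : p.Prime) (b k m t : ℕ) (hm0 : m ≠ 0)
    (hm : p^(b+k) ∣ m) (ht0 : t ≠ 0) (ht : ¬ p^(k+1) ∣ t) :
    p^b ∣ m.choose t := by
  rcases lt_or_ge m t with h | h
  · rw [Nat.choose_eq_zero_of_lt h]; exact dvd_zero _
  · have hch : m.choose t ≠ 0 := (Nat.choose_pos h).ne'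
    have hid := choose_mul_eq m t (by omega) (by omega)
    have hvm : b + k ≤ m.factorization p := (hp.pow_dvd_iff_le_factorization hm0).mp hm
    have hvt : t.factorization p ≤ k := by
      by_contra hlt
      push_neg at hlt
      exact ht ((pow_dvd_pow p hlt).trans (Nat.ordProj_dvd t p))
    have hC0 : (m-1).choose (t-1) ≠ 0 := (Nat.choose_pos (by omega)).ne'
    have h2 : (m.choose t * t).factorization p
        = (m * ((m-1).choose (t-1))).factorization p := by rw [hid]
    rw [Nat.factorization_mul hch ht0, Nat.factorization_mul hm0 hC0,
      Finsupp.add_apply, Finsupp.add_apply] at h2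
    exact (hp.pow_dvd_iff_le_factorization hch).mpr (by omega)

lemma no_carry {p : ℕ} (hp : p.Prime) (c m : ℕ) (hm0 : m ≠ 0) (hc : p^c ∣ m) :
    ¬ p ∣ (m-1).choose (p^c - 1) := by
  haveI := Fact.mk hp
  have hppos : 0 < p := hp.pos
  have hpc1 : 1 ≤ p^c := Nat.one_le_pow _ _ hppos
  have hpcm : p^c ≤ m := Nat.le_of_dvd (Nat.pos_of_ne_zero hm0) hc
  have hk : p^c - 1 ≤ m - 1 := by omega
  have hch : (m-1).choose (p^c-1) ≠ 0 := (Nat.choose_pos hk).ne'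
  intro hdvd
  have h1 : 1 ≤ ((m-1).choose (p^c-1)).factorization p := by
    have := (hp.pow_dvd_iff_le_factorization hch).mp (by rw [pow_one]; exact hdvd)
    omega
  rw [Nat.factorization_def _ hp,
    padicValNat_choose hk (Nat.lt_add_one _)] at h1
  obtain ⟨i, hi⟩ := Finset.card_pos.mp (Nat.lt_of_lt_of_le Nat.zero_lt_one h1)
  obtain ⟨hiIco, hcar⟩ := Finset.mem_filter.mp hi
  have h1i : 1 ≤ i := (Finset.mem_Ico.mp hiIco).1
  have hpipos : 0 < p^i := pow_pos hppos i
  rw [show m - 1 - (p^c - 1) = m - p^c by omega] at hcar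
  rcases le_or_gt i c with hic | hci
  · -- i ≤ c : low digits case
    have hpi_dvd_pc : p^i ∣ p^c := pow_dvd_pow p hic
    have h2 : (m - p^c) % p^i = 0 :=
      Nat.mod_eq_zero_of_dvd (Nat.dvd_sub (hpi_dvd_pc.trans hc) hpi_dvd_pc)
    have h3 : (p^c - 1) % p^i = p^i - 1 := by
      obtain ⟨A, hA⟩ := hpi_dvd_pc
      have hA' : p^c = A * p^i := by rw [hA]; ring
      have hA1 : 1 ≤ A := by
        rcases Nat.eq_zero_or_pos A with h0 | h
        · rw [h0] at hA'; omega
        · exact h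
      have hAle : p^i ≤ A * p^i := Nat.le_mul_of_pos_left _ hA1
      have hsm : (A-1) * p^i = A * p^i - p^i := by rw [Nat.sub_one_mul]
      have heq : p^c - 1 = (p^i - 1) + (A - 1) * p^i := by omega
      rw [heq, Nat.add_mul_mod_self_right, Nat.mod_eq_of_lt (by omega)]
    omega
  · -- c < i : high digits case
    have hpc_lt : p^c < p^i := Nat.pow_lt_pow_right hp.one_lt hci
    have h3 : (p^c - 1) % p^i = p^c - 1 := Nat.mod_eq_of_lt (by omega)
    have hrc : p^c ∣ m % p^i := (Nat.dvd_mod_iff (pow_dvd_pow p hci.le)).mpr hc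
    have hdm : m / p^i * p^i + m % p^i = m := Nat.div_add_mod' m (p^i)
    rw [h3] at hcar
    rcases Nat.eq_zero_or_pos (m % p^i) with h0 | hpos
    · have hdvd_i : p^i ∣ m := Nat.dvd_of_mod_eq_zero h0
      have him : p^i ≤ m := Nat.le_of_dvd (Nat.pos_of_ne_zero hm0) hdvd_i
      have h5 : m / p^i * p^i = m := Nat.div_mul_cancel hdvd_i
      have h6 : p^i * (m / p^i - 1) = m / p^i * p^i - p^i := by
        rw [mul_comm, Nat.sub_one_mul]
      have h4 : m - p^c = p^i * (m / p^i - 1) + (p^i - p^c) := by omega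
      rw [h4, Nat.mul_add_mod, Nat.mod_eq_of_lt (by omega : p^i - p^c < p^i)] at hcar
      omega
    · have hrge : p^c ≤ m % p^i := Nat.le_of_dvd hpos hrc
      have hrlt : m % p^i < p^i := Nat.mod_lt _ hpipos
      have hcomm : p^i * (m / p^i) = m / p^i * p^i := Nat.mul_comm _ _
      have h4 : m - p^c = p^i * (m / p^i) + (m % p^i - p^c) := by omega
      rw [h4, Nat.mul_add_mod, Nat.mod_eq_of_lt (by omega : m % p^i - p^c < p^i)] at hcar
      omega

lemma factorization_choose_prime_pow {p : ℕ} (hp : p.Prime) (c m : ℕ)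
    (hm0 : m ≠ 0) (hc : p^c ∣ m) :
    (m.choose (p^c)).factorization p + c = m.factorization p := by
  have hppos : 0 < p := hp.pos
  have hpc1 : 1 ≤ p^c := Nat.one_le_pow _ _ hppos
  have hpcm : p^c ≤ m := Nat.le_of_dvd (Nat.pos_of_ne_zero hm0) hc
  have hch : m.choose (p^c) ≠ 0 := (Nat.choose_pos hpcm).ne'
  have hC0 : (m-1).choose (p^c-1) ≠ 0 := (Nat.choose_pos (by omega)).ne'
  have hid := choose_mul_eq m (p^c) (by omega) (by omega)
  have h2 : (m.choose (p^c) * p^c).factorization p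
      = (m * ((m-1).choose (p^c-1))).factorization p := by rw [hid]
  rw [Nat.factorization_mul hch (by positivity), Nat.factorization_mul hm0 hC0,
    Finsupp.add_apply, Finsupp.add_apply, hp.factorization_pow, Finsupp.single_eq_same,
    Nat.factorization_eq_zero_of_not_dvd (no_carry hp c m hm0 hc)] at h2
  omega

lemma Kn_pos (n : ℕ) : Kn n ≠ 0 := by
  rw [Kn]
  refine Nat.mul_ne_zero (by positivity) (Finset.prod_ne_zero_iff.mpr ?_)
  intro p hp
  have := (Finset.mem_filter.mp hp).2.1.pos
  positivity

lemma Kn_factorization (n q : ℕ) (hq : q.Prime) :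
    (Kn n).factorization q = if q = 2 then Nat.log 2 n else Nat.log q (2*n) := by
  set F := (Finset.range (2*n+1)).filter (fun p => p.Prime ∧ Odd p) with hF
  have hFne : ∀ p ∈ F, p ^ Nat.log p (2*n) ≠ 0 := by
    intro p hp
    have := (Finset.mem_filter.mp hp).2.1.pos
    positivity
  have hprod0 : (∏ p ∈ F, p ^ Nat.log p (2*n)) ≠ 0 := Finset.prod_ne_zero_iff.mpr hFne
  rw [Kn, Nat.factorization_mul (by positivity) hprod0, Finsupp.add_apply,
    Nat.prime_two.factorization_pow, Nat.factorization_prod hFne]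
  have hsum : (∑ p ∈ F, (p ^ Nat.log p (2*n)).factorization) q
      = ∑ p ∈ F, ((p ^ Nat.log p (2*n)).factorization) q := by
    rw [Finset.sum_apply']
  rw [hsum]
  have hterm : ∀ p ∈ F, ((p ^ Nat.log p (2*n)).factorization) q
      = if p = q then Nat.log p (2*n) else 0 := by
    intro p hp
    rw [(Finset.mem_filter.mp hp).2.1.factorization_pow, Finsupp.single_apply]
  have hsum2 : ∑ p ∈ F, ((p ^ Nat.log p (2*n)).factorization) q
      = ∑ p ∈ F, (if p = q then Nat.log p (2*n) else 0) := Finset.sum_congr rfl hterm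
  rw [hsum2, Finset.sum_ite_eq' F q (fun p => Nat.log p (2*n))]
  by_cases hq2 : q = 2
  · subst hq2
    rw [Finsupp.single_eq_same, if_pos rfl]
    have : (2:ℕ) ∉ F := by
      intro h2
      have := (Finset.mem_filter.mp h2).2.2
      rw [Nat.odd_iff] at this
      omega
    rw [if_neg this, add_zero]
  · rw [Finsupp.single_eq_of_ne hq2, if_neg hq2, zero_add]
    by_cases hqF : q ∈ F
    · rw [if_pos hqF]
    · rw [if_neg hqF]
      -- q prime, q ≠ 2, q ∉ F means q > 2n, so log q (2n) = 0
      have hodd : Odd q := hq.odd_of_ne_two hq2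
      have hqgt : 2*n < q := by
        by_contra hle
        push_neg at hle
        exact hqF (Finset.mem_filter.mpr ⟨Finset.mem_range.mpr (by omega), hq, hodd⟩)
      have hlog : Nat.log q (2*n) = 0 := Nat.log_eq_zero_iff.mpr (Or.inl hqgt)
      omega

/-- Theorem 4.4: the Braun–Douglas number
`d(m,n) = gcd{ S(m, 2(i-1)) : 1 ≤ i ≤ n }` equals `m / gcd(m, K(n))`. -/
theorem stmt11 (n m : ℕ) (hn : 1 ≤ n) (hm : n + 2 ≤ m) :
    Finset.gcd (Finset.Icc 1 n) (fun i => Smi m (2*(i-1))) = m / Nat.gcd m (Kn n) := by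
  have hm0 : m ≠ 0 := by omega
  have hn0 : n ≠ 0 := by omega
  set g := Finset.gcd (Finset.Icc 1 n) (fun i => Smi m (2*(i-1))) with hgdef
  have h1mem : (1:ℕ) ∈ Finset.Icc 1 n := Finset.mem_Icc.mpr ⟨le_refl 1, hn⟩
  have hgm : g ∣ m := by
    have h : g ∣ Smi m (2*(1-1)) := Finset.gcd_dvd (f := fun i => Smi m (2*(i-1))) h1mem
    simpa [smi_zero] using h
  have hg0 : g ≠ 0 := by
    intro h
    rw [h] at hgm
    exact hm0 (Nat.eq_zero_of_zero_dvd hgm)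
  have hK0 : Kn n ≠ 0 := Kn_pos n
  have hG0 : Nat.gcd m (Kn n) ≠ 0 := fun h => hm0 (Nat.eq_zero_of_gcd_eq_zero_left h)
  have hGm : Nat.gcd m (Kn n) ∣ m := Nat.gcd_dvd_left m _
  have hq0 : m / Nat.gcd m (Kn n) ≠ 0 := by
    have := Nat.div_pos (Nat.le_of_dvd (Nat.pos_of_ne_zero hm0) hGm) (Nat.pos_of_ne_zero hG0)
    omega
  apply Nat.eq_of_factorization_eq hg0 hq0
  intro p
  by_cases hp : p.Prime
  swap
  · rw [Nat.factorization_eq_zero_of_not_prime _ hp, Nat.factorization_eq_zero_of_not_prime _ hp]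
  have hRHS : (m / Nat.gcd m (Kn n)).factorization p
      = m.factorization p - min (m.factorization p) ((Kn n).factorization p) := by
    rw [Nat.factorization_div hGm, Finsupp.tsub_apply, Nat.factorization_gcd hm0 hK0,
      Finsupp.inf_apply]
  rw [hRHS]
  set v := m.factorization p with hv
  set e := (Kn n).factorization p with he
  set c := min v e with hc
  have hcv : c ≤ v := min_le_left _ _
  have hce : c ≤ e := min_le_right _ _
  have hKfac : e = if p = 2 then Nat.log 2 n else Nat.log p (2*n) := by
    rw [he, Kn_factorization n p hp]
  have hmv : p ^ v ∣ m := by rw [hv]; exact Nat.ordProj_dvd m p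
  -- Upper bound: p^(v-c) divides every S(m, 2(i-1))
  have hub : ∀ i ∈ Finset.Icc 1 n, p ^ (v - c) ∣ Smi m (2*(i-1)) := by
    intro i hi
    obtain ⟨hi1, hin⟩ := Finset.mem_Icc.mp hi
    rcases le_or_gt v e with hve | hev
    · rw [show v - c = 0 by omega, pow_zero]; exact one_dvd _
    have hcee : c = e := by omega
    set j := i - 1 with hj
    rw [smi_expansion]
    apply Finset.dvd_sum
    intro t ht
    obtain ⟨ht1, ht2⟩ := Finset.mem_Icc.mp ht
    have htn : t ≤ 2*n - 1 := by omega
    by_cases hp2 : p = 2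
    · subst hp2
      rw [if_pos rfl] at hKfac
      have hn2e : n < 2 ^ (e + 1) := by rw [hKfac]; exact Nat.lt_pow_succ_log_self one_lt_two n
      by_cases hd2 : (2:ℕ)^(e+1) ∣ t
      · have ht2e : 2^(e+1) ≤ t := Nat.le_of_dvd (by omega) hd2
        have h2e2 : (2:ℕ)^(e+2) = 2 * 2^(e+1) := by ring
        have hnd : ¬ (2:ℕ)^(e+2) ∣ t := by
          intro hd
          have := Nat.le_of_dvd (by omega : 0 < t) hd
          omega
        rcases Nat.eq_zero_or_pos (v - e) with hb0 | hbpos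
        · rw [show v - c = 0 by omega, pow_zero]; exact one_dvd _
        have h4 : (4:ℕ) ∣ aCoef j t := by
          refine dvd_trans ?_ (four_pow_dvd_aCoef j t)
          have h1t : 1 ≤ t - (j+1) := by omega
          calc (4:ℕ) = 4^1 := (pow_one 4).symm
            _ ∣ 4^(t-(j+1)) := pow_dvd_pow 4 h1t
        have hch : (2:ℕ)^(v-e-1) ∣ m.choose t := by
          apply pow_dvd_choose_aux hp (v-e-1) (e+1) m t hm0 ?_ (by omega) hnd
          rw [show v-e-1+(e+1) = v by omega]
          exact hmv
        have hsplit : (2:ℕ)^(v-c) = 2 * 2^(v-e-1) := by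
          have hps := pow_succ 2 (v-e-1)
          rw [show v-e-1+1 = v-c by omega] at hps
          rw [hps]
          exact mul_comm _ _
        rw [hsplit]
        exact mul_dvd_mul (dvd_trans (by norm_num) h4) hch
      · rw [hcee]
        refine Dvd.dvd.mul_left ?_ _
        apply pow_dvd_choose_aux hp (v-e) e m t hm0 ?_ (by omega) hd2
        rw [show v-e+e = v by omega]
        exact hmv
    · rw [if_neg hp2] at hKfac
      have h2ne : 2*n < p ^ (e + 1) := by
        rw [hKfac]; exact Nat.lt_pow_succ_log_self hp.one_lt _
      have hnd : ¬ p^(e+1) ∣ t := by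
        intro hd
        have := Nat.le_of_dvd (by omega : 0 < t) hd
        omega
      rw [hcee]
      refine Dvd.dvd.mul_left ?_ _
      apply pow_dvd_choose_aux hp (v-e) e m t hm0 ?_ (by omega) hnd
      rw [show v-e+e = v by omega]
      exact hmv
  -- Lower bound: some S(m, 2(i-1)) is not divisible by p^(v-c+1)
  have hlb : ∃ i ∈ Finset.Icc 1 n, ¬ p ^ (v - c + 1) ∣ Smi m (2*(i-1)) := by
    rcases Nat.eq_zero_or_pos c with hc0 | hcpos
    · refine ⟨1, h1mem, ?_⟩
      rw [show 2*(1-1) = 0 by norm_num, smi_zero, hc0, Nat.sub_zero]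
      rw [hv]
      exact Nat.pow_succ_factorization_not_dvd hm0 hp
    · have hpcm : p ^ c ∣ m := by
        apply (hp.pow_dvd_iff_le_factorization hm0).mpr
        omega
      have hpcmle : p^c ≤ m := Nat.le_of_dvd (Nat.pos_of_ne_zero hm0) hpcm
      have hch0 : m.choose (p^c) ≠ 0 := (Nat.choose_pos hpcmle).ne'
      have hfacch := factorization_choose_prime_pow hp c m hm0 hpcm
      by_cases hp2 : p = 2
      · subst hp2
        rw [if_pos rfl] at hKfac
        have h2e : (2:ℕ)^e ≤ n := by rw [hKfac]; exact Nat.pow_log_le_self 2 hn0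
        have h2c_le : 2^c ≤ n :=
          le_trans (Nat.pow_le_pow_right (by norm_num) hce) h2e
        have h2c2 : 2 ≤ 2^c := by
          calc (2:ℕ) = 2^1 := (pow_one 2).symm
          _ ≤ 2^c := Nat.pow_le_pow_right (by norm_num) hcpos
        refine ⟨2^c, Finset.mem_Icc.mpr ⟨Nat.one_le_pow _ _ (by norm_num), h2c_le⟩, ?_⟩
        set j := 2^c - 1 with hjdef
        have hj1 : 1 ≤ j := by omega
        have hj1n : j + 1 = 2^c := by omega
        rw [smi_expansion]
        have ht0mem : j + 1 ∈ Finset.Icc 1 (2*j+1) := Finset.mem_Icc.mpr ⟨by omega, by omega⟩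
        intro hdvd
        rw [← Finset.sum_erase_add _ _ ht0mem] at hdvd
        have hrest : (2:ℕ) ^ (v - c + 1) ∣
            ∑ t ∈ (Finset.Icc 1 (2*j+1)).erase (j+1), aCoef j t * m.choose t := by
          apply Finset.dvd_sum
          intro t ht
          have htne := Finset.ne_of_mem_erase ht
          obtain ⟨ht1, ht2⟩ := Finset.mem_Icc.mp (Finset.mem_of_mem_erase ht)
          have hnd : ¬ (2:ℕ)^c ∣ t := by
            rintro ⟨q, rfl⟩
            rcases Nat.lt_or_ge q 2 with hq | hq
            · interval_cases q <;> omega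
            · have : 2^c * 2 ≤ 2^c * q := Nat.mul_le_mul_left _ hq
              omega
          refine Dvd.dvd.mul_left ?_ _
          apply pow_dvd_choose_aux hp (v-c+1) (c-1) m t hm0 ?_ (by omega)
            (by rw [show c-1+1 = c by omega]; exact hnd)
          rw [show v-c+1+(c-1) = v by omega]
          exact hmv
        have hkey := (Nat.dvd_add_right hrest).mp hdvd
        have hna : ¬ (2:ℕ) ∣ aCoef j (j+1) := by
          rw [aCoef_bot j hj1]
          omega
        have ha0 : aCoef j (j+1) ≠ 0 := by
          rw [aCoef_bot j hj1]
          omega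
        have hch0' : m.choose (j+1) ≠ 0 := by rw [hj1n]; exact hch0
        have hkeyfac : (aCoef j (j+1) * m.choose (j+1)).factorization 2 = v - c := by
          rw [Nat.factorization_mul ha0 hch0', Finsupp.add_apply,
            Nat.factorization_eq_zero_of_not_dvd hna, zero_add, hj1n]
          omega
        have hle := (hp.pow_dvd_iff_le_factorization (mul_ne_zero ha0 hch0')).mp hkey
        omega
      · rw [if_neg hp2] at hKfac
        have hpodd : Odd p := hp.odd_of_ne_two hp2
        have hqodd : Odd (p^c) := hpodd.pow
        have hq2 : p^c % 2 = 1 := Nat.odd_iff.mp hqodd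
        have hpe : p^e ≤ 2*n := by
          rw [hKfac]; exact Nat.pow_log_le_self p (by omega)
        have hple : p^c ≤ 2*n :=
          le_trans (Nat.pow_le_pow_right hp.one_lt.le hce) hpe
        have hpc1 : 1 ≤ p^c := Nat.one_le_pow _ _ hp.pos
        refine ⟨(p^c+1)/2, Finset.mem_Icc.mpr ⟨by omega, by omega⟩, ?_⟩
        set j := (p^c+1)/2 - 1 with hjdef
        have h2j1 : 2*j+1 = p^c := by omega
        rw [smi_expansion]
        have ht0mem : 2*j+1 ∈ Finset.Icc 1 (2*j+1) := Finset.mem_Icc.mpr ⟨by omega, le_refl _⟩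
        intro hdvd
        rw [← Finset.sum_erase_add _ _ ht0mem] at hdvd
        have hrest : p ^ (v - c + 1) ∣
            ∑ t ∈ (Finset.Icc 1 (2*j+1)).erase (2*j+1), aCoef j t * m.choose t := by
          apply Finset.dvd_sum
          intro t ht
          have htne := Finset.ne_of_mem_erase ht
          obtain ⟨ht1, ht2⟩ := Finset.mem_Icc.mp (Finset.mem_of_mem_erase ht)
          have hnd : ¬ p^c ∣ t := by
            intro hd
            have := Nat.le_of_dvd (by omega : 0 < t) hd
            omega
          refine Dvd.dvd.mul_left ?_ _
          apply pow_dvd_choose_aux hp (v-c+1) (c-1) m t hm0 ?_ (by omega)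
            (by rw [show c-1+1 = c by omega]; exact hnd)
          rw [show v-c+1+(c-1) = v by omega]
          exact hmv
        have hkey := (Nat.dvd_add_right hrest).mp hdvd
        have hna : ¬ p ∣ aCoef j (2*j+1) := by
          rw [aCoef_top]
          intro hd
          have h4 : (4:ℕ)^j = 2^(2*j) := by
            rw [show (4:ℕ) = 2^2 by norm_num, ← pow_mul]
          rw [h4] at hd
          have h2 : p ∣ 2 := hp.dvd_of_dvd_pow hd
          exact hp2 ((Nat.prime_dvd_prime_iff_eq hp Nat.prime_two).mp h2)
        have ha0 : aCoef j (2*j+1) ≠ 0 := aCoef_ne_zero j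
        have hch0' : m.choose (2*j+1) ≠ 0 := by rw [h2j1]; exact hch0
        have hkeyfac : (aCoef j (2*j+1) * m.choose (2*j+1)).factorization p = v - c := by
          rw [Nat.factorization_mul ha0 hch0', Finsupp.add_apply,
            Nat.factorization_eq_zero_of_not_dvd hna, zero_add, h2j1]
          omega
        have hle := (hp.pow_dvd_iff_le_factorization (mul_ne_zero ha0 hch0')).mp hkey
        omega
  obtain ⟨i₀, hi₀mem, hi₀⟩ := hlb
  have hubg : p ^ (v - c) ∣ g := Finset.dvd_gcd hub
  have hlbg : ¬ p ^ (v - c + 1) ∣ g := fun hd => hi₀ (hd.trans (Finset.gcd_dvd (f := fun i => Smi m (2*(i-1))) hi₀mem))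
  have h1 := (hp.pow_dvd_iff_le_factorization hg0).mp hubg
  have h2 : ¬ (v - c + 1 ≤ g.factorization p) :=
    fun hle => hlbg ((hp.pow_dvd_iff_le_factorization hg0).mpr hle)
  omega
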